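/- arXiv:2202.06844 — 3 statements merged into one kernel-verified Lean document; each statement's English description precedes it below -/
import Mathlib

section
/- For c ∈ (0,1) and a ≠ 0 with a·c not a multiple of 2π, the map h is not of the form (z₁, z₂) ↦ (q₁(z_{π(1)}), q₂(z_{π(2)})) for any permutation π of {1,2} and functions q₁, q₂ : ℝ → ℝ. -/
open MeasureTheory Complex Set

noncomputable def h (a c : ℝ) (z : ℂ) : ℂ :=
  if ‖z‖ ≤ c then z * Complex.exp ((a * (‖z‖ - c)) * Complex.I) else z

noncomputable def coord (z : ℂ) : Fin 2 → ℝ := ![z.re, z.im]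

theorem h_not_coordinatewise (a c : ℝ) (hc : 0 < c) (hc1 : c < 1) (ha : a ≠ 0)
    (hac : ∀ k : ℤ, a * c ≠ 2 * Real.pi * k) :
    ¬ ∃ (π : Equiv.Perm (Fin 2)) (q : Fin 2 → ℝ → ℝ),
        ∀ (z : ℂ) (j : Fin 2), coord (h a c z) j = q j (coord z (π j)) := by
  rintro ⟨π, q, hq⟩
  have hfin : ∀ j : Fin 2, j = 0 ∨ j = 1 := by decide
  rcases hfin (π 0) with h0 | h0
  · -- identity case
    have h1 : π 1 = 1 := by
      rcases hfin (π 1) with h1 | h1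
      · exact absurd (π.injective (h0.trans h1.symm)) (by decide)
      · exact h1
    have hq0 : ∀ x : ℝ, q 0 x = x := by
      intro x
      have hx := hq (⟨x, 1⟩ : ℂ) 0
      rw [h0] at hx
      have habs : ¬ ‖(⟨x, 1⟩ : ℂ)‖ ≤ c := by
        have h1le : (1 : ℝ) ≤ ‖(⟨x, 1⟩ : ℂ)‖ := by
          have := Complex.abs_im_le_norm (⟨x, 1⟩ : ℂ)
          simpa using this
        linarith
      simp [h, habs, coord] at hx
      exact hx.symm
    have hq1 : ∀ x : ℝ, q 1 x = x := by
      intro x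
      have hx := hq (⟨1, x⟩ : ℂ) 1
      rw [h1] at hx
      have habs : ¬ ‖(⟨1, x⟩ : ℂ)‖ ≤ c := by
        have h1le : (1 : ℝ) ≤ ‖(⟨1, x⟩ : ℂ)‖ := by
          have := Complex.abs_re_le_norm (⟨1, x⟩ : ℂ)
          simpa using this
        linarith
      simp [h, habs, coord] at hx
      exact hx.symm
    -- now evaluate at z = c/2
    have habs : ‖((c / 2 : ℝ) : ℂ)‖ ≤ c := by
      rw [Complex.norm_real, Real.norm_eq_abs, abs_of_pos (by linarith)]
      linarith
    have habsval : ‖((c / 2 : ℝ) : ℂ)‖ = c / 2 := by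
      rw [Complex.norm_real, Real.norm_eq_abs, abs_of_pos (by linarith)]
    have hval : h a c ((c / 2 : ℝ) : ℂ)
        = ((c / 2 : ℝ) : ℂ) * Complex.exp ((↑(a * (c / 2 - c)) : ℂ) * Complex.I) := by
      rw [h, if_pos habs, habsval]
      push_cast
      ring_nf
    have hre : (h a c ((c / 2 : ℝ) : ℂ)).re = (c / 2) * Real.cos (a * (c / 2 - c)) := by
      rw [hval, Complex.re_ofReal_mul, Complex.exp_ofReal_mul_I_re]
    have e0 := hq ((c / 2 : ℝ) : ℂ) 0
    rw [h0] at e0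
    simp only [coord, Matrix.cons_val_zero, Complex.ofReal_re, hre, hq0] at e0
    -- e0 : c / 2 * cos (a * (c/2 - c)) = c / 2
    have hcos : Real.cos (a * (c / 2 - c)) = 1 := by
      have hc2 : (c / 2 : ℝ) ≠ 0 := by positivity
      exact mul_left_cancel₀ hc2 (by linarith : c / 2 * Real.cos (a * (c / 2 - c)) = c / 2 * 1)
    rw [Real.cos_eq_one_iff] at hcos
    obtain ⟨n, hn⟩ := hcos
    exact hac (-2 * n) (by push_cast; nlinarith [hn, Real.pi_pos])
  · -- swap case
    have habs1 : ¬ ‖(1 : ℂ)‖ ≤ c := by simp; linarith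
    have habs2 : ¬ ‖(-1 : ℂ)‖ ≤ c := by simp; linarith
    have e1 := hq 1 0
    have e2 := hq (-1) 0
    rw [h0] at e1 e2
    simp [h, coord, show ¬ (1:ℝ) ≤ c by linarith] at e1 e2
    rw [← e2] at e1
    norm_num at e1
end

section
/- If g : ℝ² → ℝ² satisfies g(z)₁ = q₁(z₁) for some function q₁ (first coordinate depends only on first coordinate), and h is the radius-dependent rotation with parameters c ∈ (0,1), a with 0 < |a·c| < π, then g ≠ h. -/
open MeasureTheory Complex Set

theorem h_first_coord_dependent (a c : ℝ) (hc : 0 < c) (hc1 : c < 1)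
    (ha : 0 < |a * c|) (ha2 : |a * c| < Real.pi)
    (g : ℂ → ℂ) (q₁ : ℝ → ℝ) (hg : ∀ z : ℂ, (g z).re = q₁ z.re) :
    g ≠ h a c := by
  intro hgh
  subst hgh
  have h0 : (h a c 0).re = q₁ 0 := by simpa using hg 0
  have h0' : (h a c 0).re = 0 := by simp [h]
  set t : ℝ := c / 2 with ht
  have htpos : 0 < t := by positivity
  have habs : ‖(t : ℂ) * Complex.I‖ = t := by
    simp [abs_of_pos htpos]
  have h1 : (h a c ((t : ℝ) * Complex.I)).re = q₁ 0 := by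
    have := hg ((t : ℝ) * Complex.I)
    simpa using this
  have hle : t ≤ c := by
    rw [ht]; linarith
  set θ : ℝ := a * (t - c) with hθ
  have h2 : (h a c ((t : ℝ) * Complex.I)).re = -(t * Real.sin θ) := by
    rw [h, habs, if_pos hle]
    have : ((a : ℂ) * ((t:ℂ) - (c:ℂ))) * Complex.I = (θ : ℂ) * Complex.I := by
      push_cast [hθ]; ring_nf
    rw [this, Complex.exp_mul_I]
    simp [Complex.mul_re, Complex.cos_ofReal_re, Complex.sin_ofReal_re]
  have hθval : θ = -(a * c) / 2 := by rw [hθ, ht]; ring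
  have hsin : Real.sin θ ≠ 0 := by
    have h1' : -Real.pi < θ := by
      rw [hθval]
      rcases abs_cases (a * c) with ⟨h, _⟩ | ⟨h, _⟩ <;> nlinarith [Real.pi_pos]
    have h2' : θ < Real.pi := by
      rw [hθval]
      rcases abs_cases (a * c) with ⟨h, _⟩ | ⟨h, _⟩ <;> nlinarith [Real.pi_pos]
    have hθne : θ ≠ 0 := by
      rw [hθval]
      intro hcontra
      apply ha.ne'
      rw [abs_eq_zero]
      linarith
    exact fun hs => hθne (by
      rcases (Real.sin_eq_zero_iff).1 hs with ⟨n, hn⟩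
      have : n = 0 := by
        by_contra hne
        rcases lt_or_gt_of_ne hne with hlt | hgt
        · have : (n : ℝ) ≤ -1 := by exact_mod_cast (by omega : n ≤ -1)
          nlinarith [Real.pi_pos]
        · have : (1 : ℝ) ≤ n := by exact_mod_cast hgt
          nlinarith [Real.pi_pos]
      rw [this] at hn; simpa using hn.symm)
  have : -(t * Real.sin θ) = 0 := by rw [← h2, h1, ← h0, h0']
  exact mul_ne_zero htpos.ne' hsin (by linarith)
end

section
/- The pushforward of the uniform measure on the closed disk of radius c under the rotation-by-angle-a(r−c) map h equals the uniform measure on that disk. -/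
open MeasureTheory Complex Set

-- derivative of abs
lemma hasFDerivAt_cabs {z : ℂ} (hz : z ≠ 0) :
    HasFDerivAt (fun w : ℂ => ‖w‖)
      (‖z‖⁻¹ • (z.re • Complex.reCLM + z.im • Complex.imCLM)) z := by
  have h2 : HasFDerivAt (fun w : ℂ => ‖w‖ ^ 2) (2 • innerSL ℝ z) z :=
    (hasStrictFDerivAt_norm_sq z).hasFDerivAt
  have h3 : HasFDerivAt (fun w : ℂ => Real.sqrt (‖w‖ ^ 2))
      ((1 / (2 * Real.sqrt (‖z‖ ^ 2))) • (2 • innerSL ℝ z)) z := by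
    refine (Real.hasDerivAt_sqrt ?_).comp_hasFDerivAt z h2
    simpa using hz
  have hfun : (fun w : ℂ => Real.sqrt (‖w‖ ^ 2)) = fun w : ℂ => ‖w‖ := by
    funext w
    rw [Real.sqrt_sq (norm_nonneg w)]
  rw [hfun] at h3
  convert h3 using 1
  ext w
  have hr : Real.sqrt (‖z‖ ^ 2) = ‖z‖ := by
    rw [Real.sqrt_sq (norm_nonneg z)]
  simp [hr, real_inner_comm]
  ring

noncomputable def Lh (a c : ℝ) (z : ℂ) : ℂ →L[ℝ] ℂ :=
  Complex.exp ((a * (‖z‖ - c)) * Complex.I) •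
    (ContinuousLinearMap.id ℝ ℂ +
      ((a / ‖z‖) • (z.re • Complex.reCLM + z.im • Complex.imCLM)).smulRight
        (z * Complex.I))

lemma hasFDerivAt_F (a c : ℝ) {z : ℂ} (hz : z ≠ 0) :
    HasFDerivAt (fun w : ℂ => w * Complex.exp ((a * (‖w‖ - c)) * Complex.I))
      (Lh a c z) z := by
  have habs := hasFDerivAt_cabs hz
  have hψ : HasFDerivAt (fun w : ℂ => a * (‖w‖ - c))
      (a • (‖z‖⁻¹ • (z.re • Complex.reCLM + z.im • Complex.imCLM))) z :=
    (habs.sub_const c).const_mul a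
  have hu := (Complex.ofRealCLM.hasFDerivAt.comp z hψ).mul_const Complex.I
  have hexp := (((Complex.hasDerivAt_exp
      (((a * (‖z‖ - c) : ℝ) : ℂ) * Complex.I)).hasFDerivAt).restrictScalars ℝ).comp z hu
  have hF := (hasFDerivAt_id z).mul' hexp
  have hfun : (fun w : ℂ => w * Complex.exp ((a * (‖w‖ - c)) * Complex.I))
      = fun w : ℂ => w * Complex.exp (((a * (‖w‖ - c) : ℝ) : ℂ) * Complex.I) := by
    funext w; push_cast; ring_nf
  rw [hfun]
  refine hF.congr_fderiv ?_
  ext w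
  simp [Lh, div_eq_mul_inv]
  ring

lemma det_Lh (a c : ℝ) {z : ℂ} (hz : z ≠ 0) : (Lh a c z).det = 1 := by
  have habs : ‖Complex.exp ((a * (‖z‖ - c)) * Complex.I)‖ = 1 := by
    rw [Complex.norm_exp]
    simp
  have hpq : (Complex.exp ((a * (‖z‖ - c)) * Complex.I)).re ^ 2
      + (Complex.exp ((a * (‖z‖ - c)) * Complex.I)).im ^ 2 = 1 := by
    have := Complex.sq_norm (Complex.exp ((a * (‖z‖ - c)) * Complex.I))
    rw [habs] at this
    rw [Complex.normSq_apply] at this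
    nlinarith [this]
  rw [ContinuousLinearMap.det, ← LinearMap.det_toMatrix Complex.basisOneI,
    Matrix.det_fin_two]
  simp [LinearMap.toMatrix_apply, Lh]
  linear_combination hpq

lemma abs_h (a c : ℝ) (z : ℂ) : ‖h a c z‖ = ‖z‖ := by
  unfold h
  split_ifs with hle
  · rw [norm_mul, Complex.norm_exp]
    simp
  · rfl

lemma measurable_h (a c : ℝ) : Measurable (h a c) := by
  unfold h
  apply Measurable.ite
  · exact measurableSet_le (continuous_norm.measurable) measurable_const
  · exact (measurable_id.mul
      ((Complex.continuous_exp.measurable).comp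
        ((measurable_const.mul
          ((Complex.continuous_ofReal.measurable.comp
            continuous_norm.measurable).sub measurable_const)).mul measurable_const)))
  · exact measurable_id

lemma injective_h (a c : ℝ) : Function.Injective (h a c) := by
  intro z w hzw
  have habs : ‖z‖ = ‖w‖ := by
    rw [← abs_h a c z, ← abs_h a c w, hzw]
  unfold h at hzw
  rw [habs] at hzw
  split_ifs at hzw with hle
  · exact mul_right_cancel₀ (Complex.exp_ne_zero _) hzw
  · exact hzw

lemma h_eqOn (a c : ℝ) : EqOn (h a c)
    (fun w : ℂ => w * Complex.exp ((a * (‖w‖ - c)) * Complex.I))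
    (Metric.ball (0 : ℂ) c \ {0}) := by
  intro z hz
  have : ‖z‖ < c := by
    simpa using mem_ball_zero_iff.1 hz.1
  simp only [h, if_pos this.le]

lemma image_h (a c : ℝ) :
    h a c '' (Metric.ball (0 : ℂ) c \ {0}) = Metric.ball (0 : ℂ) c \ {0} := by
  ext w
  constructor
  · rintro ⟨z, hz, rfl⟩
    refine ⟨?_, ?_⟩
    · rw [mem_ball_zero_iff] at *
      show ‖h a c z‖ < c
      have : ‖h a c z‖ = ‖z‖ := abs_h a c z
      rw [show (‖h a c z‖ : ℝ) = ‖h a c z‖ from rfl, this]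
      exact mem_ball_zero_iff.1 hz.1
    · simp only [mem_singleton_iff]
      intro h0
      apply hz.2
      have := abs_h a c z
      rw [h0] at this
      simp only [norm_zero] at this
      exact norm_eq_zero.1 this.symm
  · intro hw
    refine ⟨w * Complex.exp (-((a * (‖w‖ - c)) * Complex.I)), ?_, ?_⟩
    · have habsz : ‖w * Complex.exp (-((a * (‖w‖ - c)) * Complex.I))‖
          = ‖w‖ := by
        rw [norm_mul, Complex.norm_exp]
        simp
      constructor
      · rw [mem_ball_zero_iff] at *
        show ‖_‖ < c
        rw [habsz]
        exact mem_ball_zero_iff.1 hw.1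
      · simp only [mem_singleton_iff, mul_eq_zero, not_or]
        exact ⟨fun h0 => hw.2 (by simp [h0]), Complex.exp_ne_zero _⟩
    · have habsz : ‖w * Complex.exp (-((a * (‖w‖ - c)) * Complex.I))‖
          = ‖w‖ := by
        rw [norm_mul, Complex.norm_exp]
        simp
      have hlt : ‖w‖ < c := by
        have := mem_ball_zero_iff.1 hw.1
        simpa using this
      unfold h
      rw [habsz, if_pos hlt.le, mul_assoc, ← Complex.exp_add]
      simp

lemma key_image (a c : ℝ) {t : Set ℂ} (ht : MeasurableSet t)
    (hts : t ⊆ Metric.ball (0 : ℂ) c \ {0}) :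
    volume (h a c '' t) = volume t := by
  have hderiv : ∀ x ∈ t, HasFDerivWithinAt (h a c) (Lh a c x) t x := by
    intro x hx
    have hx0 : x ≠ 0 := (hts hx).2
    refine ((hasFDerivAt_F a c hx0).hasFDerivWithinAt).congr ?_ ?_
    · intro y hy
      exact h_eqOn a c (hts hy)
    · exact h_eqOn a c (hts hx)
  have hinj : InjOn (h a c) t := (injective_h a c).injOn
  have := lintegral_image_eq_lintegral_abs_det_fderiv_mul volume ht hderiv hinj
    (fun _ => (1 : ENNReal))
  rw [setLIntegral_one] at this
  rw [this]
  rw [← setLIntegral_one]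
  apply setLIntegral_congr_fun ht
  intro x hx
  show ENNReal.ofReal |(Lh a c x).det| * 1 = 1
  rw [det_Lh a c (hts hx).2]
  norm_num

theorem h_pushforward_uniform_disk (a c : ℝ) (hc : 0 < c)
    (μ : Measure ℂ)
    (hμ : μ = (volume (Metric.closedBall (0 : ℂ) c))⁻¹ •
        volume.restrict (Metric.closedBall (0 : ℂ) c)) :
    Measure.map (h a c) μ = μ := by
  subst hμ
  rw [Measure.map_smul]
  congr 1
  set B := Metric.closedBall (0 : ℂ) c with hB
  set s := Metric.ball (0 : ℂ) c \ {0} with hs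
  have hsB : s =ᵐ[volume] B := by
    have h1 : volume (s \ B) = 0 := by
      have : s \ B = ∅ := by
        apply diff_eq_empty.2
        exact (diff_subset).trans Metric.ball_subset_closedBall
      simp [this]
    have h2 : volume (B \ s) = 0 := by
      refine measure_mono_null (?_ : B \ s ⊆ Metric.sphere (0 : ℂ) c ∪ {0}) ?_
      · intro z hz
        simp only [hB, hs, mem_diff, Metric.mem_closedBall, mem_singleton_iff,
          Metric.mem_ball, not_and, not_not, mem_union, Metric.mem_sphere] at *
        rcases eq_or_lt_of_le hz.1 with he | hlt
        · exact Or.inl he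
        · exact Or.inr (hz.2 hlt)
      · exact measure_union_null (Measure.addHaar_sphere volume 0 c) (by simp)
    exact (ae_le_set.2 h1).antisymm (ae_le_set.2 h2)
  have hmeas := measurable_h a c
  ext u hu
  rw [Measure.map_apply hmeas hu, Measure.restrict_apply hu,
    Measure.restrict_apply (hmeas hu)]
  have e1 : volume (h a c ⁻¹' u ∩ B) = volume (h a c ⁻¹' u ∩ s) :=
    measure_congr ((Filter.EventuallyEq.refl _ _).inter hsB.symm)
  have e2 : volume (u ∩ B) = volume (u ∩ s) :=
    measure_congr ((Filter.EventuallyEq.refl _ _).inter hsB.symm)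
  rw [e1, e2]
  have himg : h a c '' (h a c ⁻¹' u ∩ s) = u ∩ s := by
    ext w
    constructor
    · rintro ⟨z, ⟨hzu, hzs⟩, rfl⟩
      refine ⟨hzu, ?_⟩
      rw [hs, ← image_h a c]
      exact mem_image_of_mem _ hzs
    · rintro ⟨hwu, hws⟩
      rw [hs, ← image_h a c] at hws
      obtain ⟨z, hzs, rfl⟩ := hws
      exact ⟨z, ⟨hwu, hzs⟩, rfl⟩
  rw [← himg]
  exact (key_image a c ((hmeas hu).inter
    (Metric.isOpen_ball.measurableSet.diff (measurableSet_singleton 0)))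
    inter_subset_right).symm
end
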